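/- Let p > q > 1 be integers and let ((F_1,…,F_k), I_sep) determine a filled AUX(p,q) instance with deadline sequences (d'_p,d_p)[1..N] and (d'_q,d_q)[1..N] (indexed in order of the defining blocks). Then these sequences satisfy the AUX(p,q) ordering conditions: for each l ∈ {p,q}, d'_l[1] ≤ d_l[1] ≤ d'_l[2] ≤ d_l[2] ≤ … ≤ d'_l[N] ≤ d_l[N], and d_p[i] ≤ d'_q[i] for all i = 1,…,N. -/

import Mathlib

/-- A task: an integer release time `r`, an integer deadline `d` (together forming the
availability interval `[r, d]`), and a processing time `len : ℕ`. -/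
structure Job where
  r : ℤ
  d : ℤ
  len : ℕ

/-- A schedule `t` (real starting times) is feasible for the family of tasks `T`:
every task starts no earlier than its release time, completes no later than its deadline,
and the execution intervals `[t i, t i + len i)` are pairwise disjoint. -/
def FeasibleSchedule {ι : Type} (T : ι → Job) (t : ι → ℝ) : Prop :=
  (∀ i, ((T i).r : ℝ) ≤ t i ∧ t i + ((T i).len : ℝ) ≤ ((T i).d : ℝ)) ∧
  Pairwise fun i j => Disjoint (Set.Ico (t i) (t i + ((T i).len : ℝ)))
    (Set.Ico (t j) (t j + ((T j).len : ℝ)))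

/-- A block: a finite set of auxiliary tasks (given relative to the block's offset), an
optional pair of relative deadlines `(d'_p, d_p)` for a long pending task of length `p`,
and an optional pair of relative deadlines `(d'_q, d_q)` for a short pending task of
length `q`. -/
structure Block (p q : ℕ) where
  auxJobs : List Job
  pendP : Option (ℤ × ℤ)
  pendQ : Option (ℤ × ℤ)

instance {p q : ℕ} : Inhabited (Block p q) := ⟨⟨[], none, none⟩⟩

/-- The length of a block: the sum of the processing times of all its tasks
(auxiliary and pending). -/
def Block.L {p q : ℕ} (F : Block p q) : ℕ :=
  (F.auxJobs.map Job.len).sum + (F.pendP.elim 0 fun _ => p) + (F.pendQ.elim 0 fun _ => q)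

/-- Well-formedness of a block: auxiliary tasks have processing times in `{p, q}`,
non-negative release times, and all deadlines of the block lie in `[1, L(F)+1]`;
for each pending task the two deadlines satisfy `d' ≤ d`. -/
def Block.WF {p q : ℕ} (F : Block p q) : Prop :=
  (∀ T ∈ F.auxJobs, (T.len = p ∨ T.len = q) ∧ 0 ≤ T.r ∧ 1 ≤ T.d ∧ T.d ≤ (F.L : ℤ) + 1) ∧
  (∀ dd ∈ F.pendP, dd.1 ≤ dd.2 ∧ 1 ≤ dd.1 ∧ dd.2 ≤ (F.L : ℤ) + 1) ∧
  (∀ dd ∈ F.pendQ, dd.1 ≤ dd.2 ∧ 1 ≤ dd.1 ∧ dd.2 ≤ (F.L : ℤ) + 1)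

/-- The offset of the `i`-th block (0-based): `ofs 0 = 0`, and
`ofs (i+1) = ofs i + L(F_i) + (q + 1 if a separator is placed after block i else 0)`. -/
def ofs (p q : ℕ) (B : List (Block p q)) (S : Finset ℕ) : ℕ → ℤ
  | 0 => 0
  | i + 1 => ofs p q B S i + ((B.getD i default).L : ℤ) +
      (if i ∈ S then (q : ℤ) + 1 else 0)

/-- The separator tasks of the filled instance, each labelled by the 0-based index of the
block it follows: for `i ∈ S`, the task `([ofs i + L i + 1, ofs i + L i + q + 1], q)`. -/
def sepList (p q : ℕ) (B : List (Block p q)) (S : Finset ℕ) : List (ℕ × Job) :=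
  (List.range B.length).filterMap fun i =>
    if i ∈ S then
      some (i, ⟨ofs p q B S i + ((B.getD i default).L : ℤ) + 1,
        ofs p q B S i + ((B.getD i default).L : ℤ) + q + 1, q⟩)
    else none

/-- The auxiliary tasks of the filled instance, labelled by the 0-based index of the block
they come from, shifted by the block's offset. -/
def auxList (p q : ℕ) (B : List (Block p q)) (S : Finset ℕ) : List (ℕ × Job) :=
  (List.range B.length).flatMap fun i =>
    (B.getD i default).auxJobs.map fun T =>
      (i, ⟨T.r + ofs p q B S i, T.d + ofs p q B S i, T.len⟩)

/-- The long pending tasks of the filled instance, in the order of the defining blocks: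
each entry records the 0-based index of the defining block and the absolute pair of
deadlines `(d' + ofs, d + ofs)`. -/
def pendPList (p q : ℕ) (B : List (Block p q)) (S : Finset ℕ) : List (ℕ × ℤ × ℤ) :=
  (List.range B.length).filterMap fun i =>
    (B.getD i default).pendP.map fun dd =>
      (i, dd.1 + ofs p q B S i, dd.2 + ofs p q B S i)

/-- The short pending tasks of the filled instance, analogous to `pendPList`. -/
def pendQList (p q : ℕ) (B : List (Block p q)) (S : Finset ℕ) : List (ℕ × ℤ × ℤ) :=
  (List.range B.length).filterMap fun i =>
    (B.getD i default).pendQ.map fun dd =>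
      (i, dd.1 + ofs p q B S i, dd.2 + ofs p q B S i)

/-- The index type of the tasks of the filled AUX(p,q) instance:
separator, auxiliary, long pending and short pending tasks. -/
abbrev FilledIdx (p q : ℕ) (B : List (Block p q)) (S : Finset ℕ) : Type :=
  Fin (sepList p q B S).length ⊕ Fin (auxList p q B S).length ⊕
    Fin (pendPList p q B S).length ⊕ Fin (pendQList p q B S).length

/-- The family of all tasks of the filled AUX(p,q) instance.  The long pending task with
absolute deadlines `(d', d)` is the task `([0, d], p)` (with early deadline `d'`), and
similarly for the short pending tasks. -/
def filledFamily (p q : ℕ) (B : List (Block p q)) (S : Finset ℕ) :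
    FilledIdx p q B S → Job :=
  Sum.elim (fun i => ((sepList p q B S).get i).2) <|
    Sum.elim (fun i => ((auxList p q B S).get i).2) <|
      Sum.elim (fun i => ⟨0, ((pendPList p q B S).get i).2.2, p⟩)
        (fun i => ⟨0, ((pendQList p q B S).get i).2.2, q⟩)

/-- Feasibility of the filled AUX(p,q) instance: there are equally many pending tasks of
each length, and there is a feasible schedule of all tasks such that for each index `i`,
the `i`-th long pending task completes by its early deadline or the `i`-th short pending
task completes by its early deadline. -/
def FilledFeasible (p q : ℕ) (B : List (Block p q)) (S : Finset ℕ) : Prop :=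
  ∃ (h : (pendPList p q B S).length = (pendQList p q B S).length)
    (t : FilledIdx p q B S → ℝ),
    FeasibleSchedule (filledFamily p q B S) t ∧
    ∀ i : Fin (pendPList p q B S).length,
      t (Sum.inr (Sum.inr (Sum.inl i))) + (p : ℝ) ≤
          (((pendPList p q B S).get i).2.1 : ℝ) ∨
        t (Sum.inr (Sum.inr (Sum.inr (Fin.cast h i)))) + (q : ℝ) ≤
          (((pendQList p q B S).get (Fin.cast h i)).2.1 : ℝ)


private lemma ofs_step (p q : ℕ) (B : List (Block p q)) (S : Finset ℕ) (i : ℕ) :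
    ofs p q B S i + ((B.getD i default).L : ℤ) ≤ ofs p q B S (i + 1) := by
  simp only [ofs]
  split_ifs with h
  · have : (0:ℤ) ≤ (q : ℤ) := Int.natCast_nonneg q
    linarith
  · simp

private lemma ofs_mono (p q : ℕ) (B : List (Block p q)) (S : Finset ℕ) :
    Monotone (ofs p q B S) := by
  apply monotone_nat_of_le_succ
  intro i
  refine le_trans ?_ (ofs_step p q B S i)
  have : (0:ℤ) ≤ ((B.getD i default).L : ℤ) := Int.natCast_nonneg _
  linarith

private lemma ofs_lt (p q : ℕ) (B : List (Block p q)) (S : Finset ℕ) {i j : ℕ} (h : i < j) :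
    ofs p q B S i + ((B.getD i default).L : ℤ) ≤ ofs p q B S j :=
  le_trans (ofs_step p q B S i) (ofs_mono p q B S h)

private lemma mem_pendP {p q : ℕ} {B : List (Block p q)} {S : Finset ℕ} {x : ℕ × ℤ × ℤ}
    (hx : x ∈ pendPList p q B S) :
    ∃ j dd, j < B.length ∧ (B.getD j default).pendP = some dd ∧
      x = (j, dd.1 + ofs p q B S j, dd.2 + ofs p q B S j) := by
  rcases List.mem_filterMap.1 hx with ⟨j, hj, hmap⟩
  rcases Option.map_eq_some_iff.1 hmap with ⟨dd, hdd, heq⟩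
  exact ⟨j, dd, List.mem_range.1 hj, hdd, heq.symm⟩

private lemma mem_pendQ {p q : ℕ} {B : List (Block p q)} {S : Finset ℕ} {x : ℕ × ℤ × ℤ}
    (hx : x ∈ pendQList p q B S) :
    ∃ j dd, j < B.length ∧ (B.getD j default).pendQ = some dd ∧
      x = (j, dd.1 + ofs p q B S j, dd.2 + ofs p q B S j) := by
  rcases List.mem_filterMap.1 hx with ⟨j, hj, hmap⟩
  rcases Option.map_eq_some_iff.1 hmap with ⟨dd, hdd, heq⟩
  exact ⟨j, dd, List.mem_range.1 hj, hdd, heq.symm⟩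

private lemma getD_mem {p q : ℕ} {B : List (Block p q)} {j : ℕ} (hj : j < B.length) :
    B.getD j default ∈ B := by
  rw [List.getD_eq_getElem _ _ hj]
  exact List.getElem_mem hj

private lemma pendP_bounds {p q : ℕ} {B : List (Block p q)} {S : Finset ℕ}
    (hWF : ∀ F ∈ B, F.WF) {x : ℕ × ℤ × ℤ} (hx : x ∈ pendPList p q B S) :
    ofs p q B S x.1 + 1 ≤ x.2.1 ∧ x.2.1 ≤ x.2.2 ∧
      x.2.2 ≤ ofs p q B S x.1 + ((B.getD x.1 default).L : ℤ) + 1 := by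
  obtain ⟨j, dd, hj, hdd, rfl⟩ := mem_pendP hx
  obtain ⟨h1, h2, h3⟩ := (hWF (B.getD j default) (getD_mem hj)).2.1 dd hdd
  exact ⟨by dsimp; linarith, by dsimp; linarith, by dsimp; linarith⟩

private lemma pendQ_bounds {p q : ℕ} {B : List (Block p q)} {S : Finset ℕ}
    (hWF : ∀ F ∈ B, F.WF) {x : ℕ × ℤ × ℤ} (hx : x ∈ pendQList p q B S) :
    ofs p q B S x.1 + 1 ≤ x.2.1 ∧ x.2.1 ≤ x.2.2 ∧
      x.2.2 ≤ ofs p q B S x.1 + ((B.getD x.1 default).L : ℤ) + 1 := by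
  obtain ⟨j, dd, hj, hdd, rfl⟩ := mem_pendQ hx
  obtain ⟨h1, h2, h3⟩ := (hWF (B.getD j default) (getD_mem hj)).2.2 dd hdd
  exact ⟨by dsimp; linarith, by dsimp; linarith, by dsimp; linarith⟩

private lemma pendP_fst_pairwise (p q : ℕ) (B : List (Block p q)) (S : Finset ℕ) :
    List.Pairwise (fun x y => x.1 < y.1) (pendPList p q B S) := by
  refine List.Pairwise.filterMap _ ?_ (List.pairwise_lt_range (n := B.length))
  intro a a' h b hb b' hb'
  rcases Option.map_eq_some_iff.1 (Option.mem_def.1 hb) with ⟨dd, _, rfl⟩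
  rcases Option.map_eq_some_iff.1 (Option.mem_def.1 hb') with ⟨dd', _, rfl⟩
  exact h

private lemma pendQ_fst_pairwise (p q : ℕ) (B : List (Block p q)) (S : Finset ℕ) :
    List.Pairwise (fun x y => x.1 < y.1) (pendQList p q B S) := by
  refine List.Pairwise.filterMap _ ?_ (List.pairwise_lt_range (n := B.length))
  intro a a' h b hb b' hb'
  rcases Option.map_eq_some_iff.1 (Option.mem_def.1 hb) with ⟨dd, _, rfl⟩
  rcases Option.map_eq_some_iff.1 (Option.mem_def.1 hb') with ⟨dd', _, rfl⟩
  exact h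

/-- Let `p > q > 1` and let a sequence of blocks `B` together with
separator positions `S` determine a filled AUX(p,q) instance (all blocks well formed,
separator positions among the blocks, equally many pending tasks of each length, and the
`i`-th long pending task defined in a strictly earlier block than the `i`-th short one).
Then the absolute deadline sequences of the pending tasks satisfy the AUX(p,q) ordering
conditions: for each length, `d'[1] ≤ d[1] ≤ d'[2] ≤ d[2] ≤ … ≤ d'[N] ≤ d[N]`, and
`d_p[i] ≤ d'_q[i]` for all `i`. -/
theorem filled_deadlines_ordered (p q : ℕ) (hq : 1 < q) (hpq : q < p)
    (B : List (Block p q)) (S : Finset ℕ)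
    (hWF : ∀ F ∈ B, F.WF) (hS : ∀ i ∈ S, i < B.length)
    (hN : (pendPList p q B S).length = (pendQList p q B S).length)
    (horder : ∀ i : Fin (pendPList p q B S).length,
      ((pendPList p q B S).get i).1 < ((pendQList p q B S).get (Fin.cast hN i)).1) :
    (∀ i : Fin (pendPList p q B S).length,
      ((pendPList p q B S).get i).2.1 ≤ ((pendPList p q B S).get i).2.2) ∧
    (∀ (i : ℕ) (h : i + 1 < (pendPList p q B S).length),
      ((pendPList p q B S).get ⟨i, Nat.lt_of_succ_lt h⟩).2.2 ≤
        ((pendPList p q B S).get ⟨i + 1, h⟩).2.1) ∧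
    (∀ i : Fin (pendQList p q B S).length,
      ((pendQList p q B S).get i).2.1 ≤ ((pendQList p q B S).get i).2.2) ∧
    (∀ (i : ℕ) (h : i + 1 < (pendQList p q B S).length),
      ((pendQList p q B S).get ⟨i, Nat.lt_of_succ_lt h⟩).2.2 ≤
        ((pendQList p q B S).get ⟨i + 1, h⟩).2.1) ∧
    (∀ i : Fin (pendPList p q B S).length,
      ((pendPList p q B S).get i).2.2 ≤
        ((pendQList p q B S).get (Fin.cast hN i)).2.1) := by

  refine ⟨?_, ?_, ?_, ?_, ?_⟩
  · intro i
    exact (pendP_bounds hWF (List.get_mem _ _)).2.1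
  · intro i h
    have hb1 := pendP_bounds hWF (List.get_mem (pendPList p q B S) ⟨i, Nat.lt_of_succ_lt h⟩)
    have hb2 := pendP_bounds hWF (List.get_mem (pendPList p q B S) ⟨i+1, h⟩)
    have hlt := (List.pairwise_iff_get.1 (pendP_fst_pairwise p q B S))
      ⟨i, Nat.lt_of_succ_lt h⟩ ⟨i + 1, h⟩ (by simp [Fin.lt_def])
    have hofs := ofs_lt p q B S hlt
    linarith [hb1.2.2, hb2.1]
  · intro i
    exact (pendQ_bounds hWF (List.get_mem _ _)).2.1
  · intro i h
    have hb1 := pendQ_bounds hWF (List.get_mem (pendQList p q B S) ⟨i, Nat.lt_of_succ_lt h⟩)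
    have hb2 := pendQ_bounds hWF (List.get_mem (pendQList p q B S) ⟨i+1, h⟩)
    have hlt := (List.pairwise_iff_get.1 (pendQ_fst_pairwise p q B S))
      ⟨i, Nat.lt_of_succ_lt h⟩ ⟨i + 1, h⟩ (by simp [Fin.lt_def])
    have hofs := ofs_lt p q B S hlt
    linarith [hb1.2.2, hb2.1]
  · intro i
    have hb1 := pendP_bounds hWF (List.get_mem (pendPList p q B S) i)
    have hb2 := pendQ_bounds hWF (List.get_mem (pendQList p q B S) (Fin.cast hN i))
    have hofs := ofs_lt p q B S (horder i)
    linarith [hb1.2.2, hb2.1]
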